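/- If a triple (t, r, q) of nonzero polynomials in ℚ[x] parameterizes a complete family of pairing-friendly elliptic curves with embedding degree k = 12 and CM discriminant D = 1, and deg r ≠ 2·deg t, then ρ(t, r, q) ≠ 1, i.e., deg q ≠ deg r. -/

import Mathlib

open Polynomial

/-- `f ∈ ℚ[x]` represents integers: there is an integer `a` with `f(a) ∈ ℤ`. -/
def RepresentsIntegers (f : ℚ[X]) : Prop :=
  ∃ a n : ℤ, f.eval (a : ℚ) = (n : ℚ)

/-- `f ∈ ℚ[x]` represents primes: `f` is nonconstant, irreducible over `ℚ`,
has positive leading coefficient, represents integers, and no prime number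
divides every integer value `f(a)` with `a ∈ ℤ`, `f(a) ∈ ℤ`. -/
def RepresentsPrimes (f : ℚ[X]) : Prop :=
  0 < f.natDegree ∧ Irreducible f ∧ 0 < f.leadingCoeff ∧ RepresentsIntegers f ∧
    ∀ p : ℕ, p.Prime → ∃ a n : ℤ, f.eval (a : ℚ) = (n : ℚ) ∧ ¬ (p : ℤ) ∣ n

/-- `(t, r, q)` parameterizes a complete family of pairing-friendly elliptic curves
with embedding degree `k` and CM discriminant `D`:
(i) `r` represents primes; (ii) `q` represents primes; (iii) `r ∣ q + 1 - t`;
(iv) `r ∣ Φ_k(t - 1)`; (v) `D·y² = 4q - t²` for some `y ∈ ℚ[x]`. -/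
def IsCompleteFamily (k D : ℕ) (t r q : ℚ[X]) : Prop :=
  t ≠ 0 ∧ r ≠ 0 ∧ q ≠ 0 ∧
  RepresentsPrimes r ∧ RepresentsPrimes q ∧
  r ∣ (q + 1 - t) ∧
  r ∣ (cyclotomic k ℚ).comp (t - 1) ∧
  ∃ y : ℚ[X], (D : ℚ[X]) * y ^ 2 = 4 * q - t ^ 2

lemma cyclotomic_six : cyclotomic 6 ℚ = X^2 - X + 1 := by
  have h3 : cyclotomic 3 ℚ = X^2 + X + 1 := by
    have := cyclotomic_prime ℚ 3
    rw [this]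
    simp [Finset.sum_range_succ]
    ring
  have h := cyclotomic_expand_eq_cyclotomic_mul (p := 2) (n := 3) Nat.prime_two (by norm_num) ℚ
  rw [h3] at h
  have hexp : expand ℚ 2 (X^2 + X + 1 : ℚ[X]) = X^4 + X^2 + 1 := by
    simp [map_add, expand_X]
    ring
  rw [hexp] at h
  norm_num at h
  have h3ne : (X^2 + X + 1 : ℚ[X]) ≠ 0 := by
    intro hc
    have := congrArg (Polynomial.eval 0) hc
    simp at this
  have hmul : (X^2 - X + 1 : ℚ[X]) * (X^2 + X + 1) = X^4 + X^2 + 1 := by ring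
  exact Polynomial.cyclotomic_six ℚ

lemma cyclotomic_twelve : cyclotomic 12 ℚ = X^4 - X^2 + 1 := by
  have h := cyclotomic_expand_eq_cyclotomic (p := 2) (n := 6) Nat.prime_two (by norm_num) ℚ
  rw [_root_.cyclotomic_six] at h
  norm_num at h
  rw [← h]
  simp [map_add, map_sub, expand_X]
  ring

lemma lc_sq_pos {p : ℚ[X]} (hp : p ≠ 0) : 0 < (p^2).leadingCoeff := by
  rw [leadingCoeff_pow]
  have h := leadingCoeff_ne_zero.mpr hp
  positivity

lemma natDegree_sq_add_sq {p s : ℚ[X]} (hp : p ≠ 0) (hs : s ≠ 0) :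
    (p^2 + s^2).natDegree = max (p^2).natDegree (s^2).natDegree := by
  rcases lt_trichotomy (p^2).natDegree (s^2).natDegree with hlt | heq | hgt
  · rw [natDegree_add_eq_right_of_natDegree_lt hlt, max_eq_right hlt.le]
  · have hcoeff : (p^2 + s^2).coeff (p^2).natDegree ≠ 0 := by
      rw [coeff_add]
      have h1 : (p^2).coeff (p^2).natDegree = (p^2).leadingCoeff := rfl
      have h2 : (s^2).coeff (p^2).natDegree = (s^2).leadingCoeff := by rw [heq]; rfl
      rw [h1, h2]
      have := lc_sq_pos hp
      have := lc_sq_pos hs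
      positivity
    refine le_antisymm ?_ ?_
    · refine (natDegree_add_le _ _).trans ?_
      rw [heq, max_self]
    · rw [← heq, max_self]
      exact le_natDegree_of_ne_zero hcoeff
  · rw [natDegree_add_eq_left_of_natDegree_lt hgt, max_eq_left hgt.le]

lemma sq_add_sq_eq_zero {p s : ℚ[X]} (h : p^2 + s^2 = 0) : p = 0 ∧ s = 0 := by
  by_cases hp : p = 0
  · subst hp; simp at h; exact ⟨rfl, h⟩
  · by_cases hs : s = 0
    · subst hs; simp at h; exact absurd h hp
    · exfalso
      have heq : p^2 = -(s^2) := by linear_combination h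
      have h1 := lc_sq_pos hp
      have h2 := lc_sq_pos hs
      rw [heq, leadingCoeff_neg] at h1
      linarith

/-- No ideal complete family with embedding degree 12 and CM discriminant 1 when
`deg r ≠ 2 deg t`. -/
theorem no_ideal_family_k12_D1 (t r q : ℚ[X]) (h : IsCompleteFamily 12 1 t r q)
    (hdeg : r.natDegree ≠ 2 * t.natDegree) :
    q.natDegree ≠ r.natDegree := by
  obtain ⟨ht0, hr0, hq0, hrp, hqp, hdvd1, hdvd2, y, hy⟩ := h
  intro hqr
  have hy' : y ^ 2 = 4 * q - t ^ 2 := by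
    have h1 : ((1:ℕ) : ℚ[X]) = 1 := by norm_num
    rw [h1, one_mul] at hy
    exact hy
  have hm : 0 < r.natDegree := hrp.1
  have hcyc : (cyclotomic 12 ℚ).comp (t - 1) = t^2 * (t-2)^2 + (t-1)^2 := by
    rw [cyclotomic_twelve]
    simp only [sub_comp, add_comp, pow_comp, X_comp, one_comp]
    ring
  -- t is nonconstant
  have hn : 0 < t.natDegree := by
    by_contra hn
    push_neg at hn
    obtain ⟨a, rfl⟩ := natDegree_eq_zero.mp (Nat.le_zero.mp hn)
    have hcomp : (cyclotomic 12 ℚ).comp (C a - 1) = C ((a-1)^4 - (a-1)^2 + 1) := by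
      rw [show (C a - 1 : ℚ[X]) = C (a - 1) by rw [C_sub, C_1], comp_C, cyclotomic_twelve]
      simp
    have hv : (a-1)^4 - (a-1)^2 + 1 ≠ 0 := by
      nlinarith [sq_nonneg ((a-1)^2 - 1), sq_nonneg (a-1), sq_nonneg ((a-1)^2)]
    rw [hcomp] at hdvd2
    have hur : IsUnit r := isUnit_of_dvd_unit hdvd2 (isUnit_C.mpr (isUnit_iff_ne_zero.mpr hv))
    have := natDegree_eq_zero_of_isUnit hur
    omega
  -- y ≠ 0
  have hy0 : y ≠ 0 := by
    intro h0
    subst h0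
    have h4 : (4:ℚ[X]) * q = t^2 := by linear_combination -hy'
    have hC : (C (2:ℚ)⁻¹) * (C (2:ℚ)⁻¹) * (4:ℚ[X]) = 1 := by
      rw [← map_ofNat C 4, ← C_mul, ← C_mul]
      norm_num
    have hq4 : q = (C (2:ℚ)⁻¹ * t) * (C (2:ℚ)⁻¹ * t) := by
      calc q = C (2:ℚ)⁻¹ * C (2:ℚ)⁻¹ * 4 * q := by rw [hC]; ring
        _ = C (2:ℚ)⁻¹ * C (2:ℚ)⁻¹ * ((4:ℚ[X]) * q) := by ring
        _ = C (2:ℚ)⁻¹ * C (2:ℚ)⁻¹ * t^2 := by rw [h4]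
        _ = (C (2:ℚ)⁻¹ * t) * (C (2:ℚ)⁻¹ * t) := by ring
    rcases hqp.2.1.isUnit_or_isUnit hq4 with hu | hu <;>
    · have hd0 := natDegree_eq_zero_of_isUnit hu
      rw [natDegree_C_mul (by norm_num)] at hd0
      omega
  -- degree of q
  have hq4 : (4:ℚ[X]) * q = y^2 + t^2 := by linear_combination -hy'
  have hndq : q.natDegree = max (2 * y.natDegree) (2 * t.natDegree) := by
    have h1 : ((4:ℚ[X]) * q).natDegree = q.natDegree := by
      rw [← map_ofNat C 4, natDegree_C_mul (by norm_num)]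
    rw [← h1, hq4, natDegree_sq_add_sq hy0 ht0, natDegree_pow, natDegree_pow]
  have key : r.natDegree = 2 * y.natDegree ∧ t.natDegree < y.natDegree := by
    rcases max_cases (2 * y.natDegree) (2 * t.natDegree) with ⟨h1, h2⟩ | ⟨h1, h2⟩ <;> omega
  obtain ⟨hm2e, hnlt⟩ := key
  have ht1 : (t - 1 : ℚ[X]).natDegree = t.natDegree := by
    simpa using natDegree_sub_C (p := t) (a := (1:ℚ))
  -- q + 1 - t ≠ 0
  have hne : q + 1 - t ≠ 0 := by
    intro h0
    have hz : y^2 + (t-2)^2 = 0 := by linear_combination hy' + 4*h0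
    exact hy0 (sq_add_sq_eq_zero hz).1
  -- degree of q + 1 - t is deg r
  have hdq1 : (q + 1 - t).natDegree = r.natDegree := by
    have h1 : q + 1 - t = q + (1 - t) := by ring
    have h2 : (1 - t : ℚ[X]).natDegree < q.natDegree := by
      have := natDegree_sub_le (1:ℚ[X]) t
      have hmax : max (1:ℚ[X]).natDegree t.natDegree = t.natDegree := by
        rw [natDegree_one]; exact max_eq_right (Nat.zero_le _)
      rw [hmax] at this
      omega
    rw [h1, natDegree_add_eq_left_of_natDegree_lt h2, hqr]
  obtain ⟨u, hu⟩ := hdvd1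
  have hu0 : u ≠ 0 := by rintro rfl; rw [mul_zero] at hu; exact hne hu
  have hdu : u.natDegree = 0 := by
    have hmul := natDegree_mul hr0 hu0
    rw [← hu, hdq1] at hmul
    omega
  -- the key divisibility
  have hdvd3 : r ∣ (t*y - (t-1)) * (t*y + (t-1)) := by
    have hsq : y^2 + (t-2)^2 = r * (4*u) := by linear_combination hy' + 4*hu
    have hkey : (t*y - (t-1)) * (t*y + (t-1))
        = t^2 * (r * (4*u)) - (cyclotomic 12 ℚ).comp (t-1) := by
      rw [hcyc, ← hsq]; ring
    rw [hkey]
    exact dvd_sub ((Dvd.intro (4*u) rfl).mul_left (t^2)) hdvd2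
  have hprime : Prime r := hrp.2.1.prime
  have hty : (t * y).natDegree = t.natDegree + y.natDegree := natDegree_mul ht0 hy0
  rcases hprime.2.2 _ _ hdvd3 with hd | hd
  · by_cases h0 : t*y - (t-1) = 0
    · have heq : t * y = t - 1 := by linear_combination h0
      rw [heq, ht1] at hty
      omega
    · have hle := natDegree_le_of_dvd hd h0
      have hsub := natDegree_sub_le (t*y) (t-1)
      rw [hty, ht1] at hsub
      have hmax : max (t.natDegree + y.natDegree) t.natDegree
          = t.natDegree + y.natDegree := max_eq_left (Nat.le_add_right _ _)
      rw [hmax] at hsub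
      omega
  · by_cases h0 : t*y + (t-1) = 0
    · have heq : t * y = -(t - 1) := by linear_combination h0
      rw [heq, natDegree_neg, ht1] at hty
      omega
    · have hle := natDegree_le_of_dvd hd h0
      have hsub := natDegree_add_le (t*y) (t-1)
      rw [hty, ht1] at hsub
      have hmax : max (t.natDegree + y.natDegree) t.natDegree
          = t.natDegree + y.natDegree := max_eq_left (Nat.le_add_right _ _)
      rw [hmax] at hsub
      omega
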